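/- Let X be a standard Borel G-space with U-separated cross-section Y, μ a G-invariant Borel probability measure on X, and μ_Y its transverse measure (so μ(V.B) = m_G(V)·μ_Y(B) whenever V − V ⊆ U). Assume Δ ⊆ G and an open neighbourhood W ⊆ U of 0 with (Ξ_Y − Δ) ∩ W = {0}. Then for every Borel V₀ with V₀ − V₀ ⊆ W and m_G(V₀) > 0, every Borel B ⊆ Y, and all g₁,…,g_r ∈ Δ: μ_Y(B ∩ ⋂_{k=1}^r (−g_k).B) = μ(V₀.B ∩ ⋂_{k=1}^r (−g_k).(V₀.B)) / m_G(V₀). -/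

import Mathlib

open scoped Pointwise ENNReal
open MeasureTheory Set

/-- Transverse-measure identity: with `Y` a `U`-separated cross-section, `μ` a `G`-invariant Borel
probability measure on `X`, `ν = μ_Y` its transverse measure (so `μ(V.B) = m_G(V)·ν(B)` whenever
`V - V ⊆ U`, `B ⊆ Y`), `Δ ⊆ G` and `W ⊆ U` an open neighbourhood of `0` with
`(Ξ_Y - Δ) ∩ W = {0}`: for every Borel `V₀` with `V₀ - V₀ ⊆ W` and `m_G(V₀) > 0`, every Borel
`B ⊆ Y` and all `g₁,…,g_r ∈ Δ`,
`μ_Y(B ∩ ⋂ₖ (-gₖ).B) = μ(V₀.B ∩ ⋂ₖ (-gₖ).(V₀.B)) / m_G(V₀)`. -/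
theorem stmt10 {G X : Type*} [AddCommGroup G] [TopologicalSpace G] [IsTopologicalAddGroup G]
    [LocallyCompactSpace G] [SecondCountableTopology G] [MeasurableSpace G] [BorelSpace G]
    [MeasurableSpace X] [AddAction G X]
    (μG : Measure G) [μG.IsAddHaarMeasure]
    (U : Set G) (hUo : IsOpen U) (hU0 : (0 : G) ∈ U)
    (Y : Set X) (hY : MeasurableSet Y)
    (hcross : ∀ x : X, ∃ g : G, ∃ y ∈ Y, x = g +ᵥ y)
    (hsep : {g : G | ∃ y ∈ Y, g +ᵥ y ∈ Y} ∩ U = {0})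
    (μ : Measure X) [IsProbabilityMeasure μ]
    (hinv : ∀ g : G, Measure.map (fun x => g +ᵥ x) μ = μ)
    (ν : Measure X) (hνY : ν Yᶜ = 0)
    (htrans : ∀ (V : Set G) (B : Set X), MeasurableSet V → V - V ⊆ U →
      MeasurableSet B → B ⊆ Y → μ (V +ᵥ B) = μG V * ν B)
    (Δ : Set G) (W : Set G) (hWo : IsOpen W) (hW0 : (0 : G) ∈ W) (hWU : W ⊆ U)
    (hWsep : ({g : G | ∃ y ∈ Y, g +ᵥ y ∈ Y} - Δ) ∩ W = {0})
    (V₀ : Set G) (hV₀ : MeasurableSet V₀) (hV₀W : V₀ - V₀ ⊆ W) (hV₀pos : 0 < μG V₀)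
    (B : Set X) (hB : MeasurableSet B) (hBY : B ⊆ Y)
    (r : ℕ) (g : Fin r → G) (hg : ∀ k, g k ∈ Δ)
    (hmeas : ∀ k, MeasurableSet ((-(g k)) +ᵥ B)) :
    ν (B ∩ ⋂ k, (-(g k)) +ᵥ B) =
      μ ((V₀ +ᵥ B) ∩ ⋂ k, (-(g k)) +ᵥ (V₀ +ᵥ B)) / μG V₀ := by
  set C : Set X := B ∩ ⋂ k, (-(g k)) +ᵥ B with hC
  have hCmeas : MeasurableSet C := hB.inter (MeasurableSet.iInter hmeas)
  have hCY : C ⊆ Y := (inter_subset_left).trans hBY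
  have hset : (V₀ +ᵥ B) ∩ ⋂ k, (-(g k)) +ᵥ (V₀ +ᵥ B) = V₀ +ᵥ C := by
    ext x
    constructor
    · rintro ⟨hx1, hx2⟩
      simp only [mem_iInter] at hx2
      obtain ⟨v, hv, b, hb, hvb⟩ := hx1
      refine ⟨v, hv, b, ⟨hb, ?_⟩, hvb⟩
      simp only [mem_iInter]
      intro k
      have hx2' : g k +ᵥ x ∈ V₀ +ᵥ B := by
        have := hx2 k
        rwa [Set.mem_vadd_set_iff_neg_vadd_mem, neg_neg] at this
      obtain ⟨vk, hvk, bk, hbk, hk⟩ := hx2'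
      have hk' : vk +ᵥ bk = g k +ᵥ x := hk
      have hvb' : v +ᵥ b = x := hvb
      have hk2 : bk = (g k + v + -vk) +ᵥ b := by
        have h1 : vk +ᵥ bk = (g k + v) +ᵥ b := by rw [hk', ← hvb', vadd_vadd]
        have h2 : (-vk) +ᵥ (vk +ᵥ bk) = (-vk) +ᵥ ((g k + v) +ᵥ b) := by rw [h1]
        rw [vadd_vadd, neg_add_cancel, zero_vadd, vadd_vadd] at h2
        rw [h2]; congr 1; abel
      have hΞ : (g k + v + -vk) ∈ {h : G | ∃ y ∈ Y, h +ᵥ y ∈ Y} :=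
        ⟨b, hBY hb, by rw [← hk2]; exact hBY hbk⟩
      have hW' : v - vk ∈ ({h : G | ∃ y ∈ Y, h +ᵥ y ∈ Y} - Δ) ∩ W := by
        refine ⟨⟨g k + v + -vk, hΞ, g k, hg k, by abel⟩, hV₀W ⟨v, hv, vk, hvk, rfl⟩⟩
      rw [hWsep] at hW'
      have hveq : v = vk := sub_eq_zero.mp hW'
      rw [Set.mem_vadd_set_iff_neg_vadd_mem, neg_neg]
      have hbk' : g k +ᵥ b = bk := by
        rw [hk2, ← hveq]; congr 1; abel
      rw [hbk']; exact hbk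
    · rintro ⟨v, hv, b, ⟨hb1, hb2⟩, hvb⟩
      simp only [mem_iInter] at hb2
      refine ⟨⟨v, hv, b, hb1, hvb⟩, ?_⟩
      simp only [mem_iInter]
      intro k
      have := hb2 k
      rw [Set.mem_vadd_set_iff_neg_vadd_mem, neg_neg] at this ⊢
      refine ⟨v, hv, g k +ᵥ b, this, ?_⟩
      show v +ᵥ (g k +ᵥ b) = g k +ᵥ x
      have hvb' : v +ᵥ b = x := hvb
      rw [← hvb', vadd_vadd, vadd_vadd, add_comm]
  have key : μ (V₀ +ᵥ C) = μG V₀ * ν C :=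
    htrans V₀ C hV₀ (hV₀W.trans hWU) hCmeas hCY
  rw [hset, key]
  by_cases htop : μG V₀ = ⊤
  · have hle : μG V₀ * ν C ≤ 1 := by rw [← key]; exact prob_le_one
    have hν0 : ν C = 0 := by
      by_contra hne
      rw [htop, ENNReal.top_mul hne] at hle
      exact absurd hle (by simp)
    rw [hν0, mul_zero, ENNReal.zero_div]
  · rw [ENNReal.eq_div_iff hV₀pos.ne' htop]
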